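/- Let q be a prime power and let a ≤ q - 2. The evaluation map from the space of polynomials f ∈ F_q[x,y] of total degree at most a to F_q^{(q-1)²} sending f to (f(t))_{t ∈ (F_q^×)²} is injective. -/
import Mathlib


open MvPolynomial

/-- Evaluation of a polynomial in two variables at all points of the torus
`(F^×)²`, as a linear map. -/
noncomputable def evalTorus (F : Type) [Field F] :
    MvPolynomial (Fin 2) F →ₗ[F] ((Fˣ × Fˣ) → F) :=
  LinearMap.pi fun t => (aeval ![((t.1 : F)), ((t.2 : F))]).toLinearMap

lemma eval_isEmpty_injective (F : Type) [Field F] :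
    Function.Injective (eval (fun i : Fin 0 => i.elim0) :
      MvPolynomial (Fin 0) F → F) := by
  intro p q h
  rw [eq_C_of_isEmpty p, eq_C_of_isEmpty q]
  rw [eq_C_of_isEmpty p, eq_C_of_isEmpty q, eval_C, eval_C] at h
  rw [h]

lemma one_var_vanish (F : Type) [Field F] [Fintype F] (a : ℕ)
    (haq : a ≤ Fintype.card F - 2) (g : MvPolynomial (Fin 1) F)
    (hdeg : degreeOf 0 g ≤ a)
    (hz : ∀ y : F, y ≠ 0 → eval ![y] g = 0) : g = 0 := by
  classical
  set s₀ : Fin 0 → F := fun i => i.elim0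
  set h : Polynomial F := (finSuccEquiv F 0 g).map (eval s₀) with hh
  have hcard : 2 ≤ Fintype.card F := Fintype.one_lt_card
  have hnd : h.natDegree ≤ a := by
    refine le_trans Polynomial.natDegree_map_le ?_
    rw [natDegree_finSuccEquiv]
    exact hdeg
  have h0 : h = 0 := by
    apply Polynomial.eq_zero_of_natDegree_lt_card_of_eval_eq_zero' h
      (Finset.univ.erase 0)
    · intro y hy
      have hy0 : y ≠ 0 := (Finset.mem_erase.mp hy).1
      have := eval_eq_eval_mv_eval' s₀ y g
      rw [← hh] at this
      rw [← this]
      have hv : (Fin.cons y s₀ : Fin 1 → F) = ![y] := by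
        funext i
        fin_cases i
        rfl
      rw [hv]
      exact hz y hy0
    · rw [Finset.card_erase_of_mem (Finset.mem_univ 0), Finset.card_univ]
      omega
  have hmapinj : Function.Injective
      (Polynomial.map (eval s₀ : MvPolynomial (Fin 0) F →+* F)) :=
    Polynomial.map_injective _ (eval_isEmpty_injective F)
  have : finSuccEquiv F 0 g = 0 := by
    apply hmapinj
    rw [← hh, h0, Polynomial.map_zero]
  apply (finSuccEquiv F 0).injective
  rw [this, map_zero]

lemma two_var_vanish (F : Type) [Field F] [Fintype F] (a : ℕ)
    (haq : a ≤ Fintype.card F - 2) (f : MvPolynomial (Fin 2) F)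
    (hdeg : f.totalDegree ≤ a)
    (hz : ∀ x y : F, x ≠ 0 → y ≠ 0 → eval ![x, y] f = 0) : f = 0 := by
  classical
  set P : Polynomial (MvPolynomial (Fin 1) F) := finSuccEquiv F 1 f with hP
  have hcoeff : ∀ i, P.coeff i = 0 := by
    intro i
    apply one_var_vanish F a haq
    · calc degreeOf 0 (P.coeff i) ≤ degreeOf (Fin.succ 0) f :=
            degreeOf_coeff_finSuccEquiv f 0 i
        _ ≤ f.totalDegree := degreeOf_le_totalDegree f _
        _ ≤ a := hdeg
    · intro y hy
      -- For fixed y ≠ 0, the polynomial x ↦ f(x, y) vanishes on nonzero x.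
      set Py : Polynomial F := P.map (eval ![y]) with hPy
      have hPy0 : Py = 0 := by
        apply Polynomial.eq_zero_of_natDegree_lt_card_of_eval_eq_zero' Py
          (Finset.univ.erase 0)
        · intro x hx
          have hx0 : x ≠ 0 := (Finset.mem_erase.mp hx).1
          have := eval_eq_eval_mv_eval' ![y] x f
          rw [← hP, ← hPy] at this
          rw [← this]
          have hv : (Fin.cons x ![y] : Fin 2 → F) = ![x, y] := by
            funext i
            fin_cases i <;> rfl
          rw [hv]
          exact hz x y hx0 hy
        · rw [Finset.card_erase_of_mem (Finset.mem_univ 0), Finset.card_univ]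
          have hnd : Py.natDegree ≤ a := by
            refine le_trans Polynomial.natDegree_map_le ?_
            rw [hP, natDegree_finSuccEquiv]
            exact le_trans (degreeOf_le_totalDegree f 0) hdeg
          have hcard : 2 ≤ Fintype.card F := Fintype.one_lt_card
          omega
      have := congrArg (fun p => Polynomial.coeff p i) hPy0
      simpa [hPy, Polynomial.coeff_map] using this
  have : P = 0 := Polynomial.ext fun i => by rw [hcoeff i, Polynomial.coeff_zero]
  · apply (finSuccEquiv F 1).injective
    rw [← hP, this, map_zero]

/-- The evaluation map on the torus is injective on polynomials of
total degree at most `a ≤ q - 2`. -/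
theorem eval_injective_total_degree (F : Type) [Field F] [Fintype F]
    (a : ℕ) (haq : a ≤ Fintype.card F - 2) :
    Set.InjOn (evalTorus F)
      ((restrictTotalDegree (Fin 2) F a : Submodule F (MvPolynomial (Fin 2) F)) :
        Set (MvPolynomial (Fin 2) F)) := by
  intro p hp q hq hpq
  have hmem : p - q ∈ restrictTotalDegree (Fin 2) F a :=
    Submodule.sub_mem _ hp hq
  have hdeg : (p - q).totalDegree ≤ a :=
    (mem_restrictTotalDegree _ _ _).mp hmem
  have hz : ∀ x y : F, x ≠ 0 → y ≠ 0 → eval ![x, y] (p - q) = 0 := by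
    intro x y hx hy
    have := congrFun hpq (Units.mk0 x hx, Units.mk0 y hy)
    simp only [evalTorus, LinearMap.pi_apply, AlgHom.toLinearMap_apply] at this
    have heq : (aeval ![x, y] : MvPolynomial (Fin 2) F →ₐ[F] F) p
        = aeval ![x, y] q := this
    rw [map_sub]
    have h1 : eval ![x, y] p = aeval ![x, y] p := by
      rw [← coe_aeval_eq_eval]; rfl
    have h2 : eval ![x, y] q = aeval ![x, y] q := by
      rw [← coe_aeval_eq_eval]; rfl
    rw [h1, h2, heq, sub_self]
  have := two_var_vanish F a haq (p - q) hdeg hz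
  exact sub_eq_zero.mp this
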